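/- arXiv:0909.2403 — 2 statements merged into one kernel-verified Lean document; each statement's English description precedes it below -/
import Mathlib

section
/- There exists a constant c₀ > 0 such that the following holds for all sufficiently large n. Let λ satisfy C ln n ≤ λ for a sufficiently large constant C, let 0 < ε ≤ 1/1000, and let i ≥ 0 be an integer. Let G be a fixed graph on n vertices such that for every edge e of K_n, Y_e(G) ≤ max{4nε^{2i} + λ√(4nε^{2i}), λ²}. Let G' be the ε-sparsification of G. Then with probability at least 1 − 2e^{−c₀λ²}, simultaneously for every edge e of K_n, Y_e(G') ≤ max{4nε^{2(i+1)} + λ√(4nε^{2(i+1)}), λ²}. -/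
open MeasureTheory ProbabilityTheory Real Filter

namespace RandomTriangles

/-- A graph on vertex set `Fin n`, given by edge indicators on unordered pairs
(values on diagonal pairs are never consulted). -/
abbrev Graph (n : ℕ) := Sym2 (Fin n) → Bool

/-- The edge set of the complete graph `K_n`: all non-diagonal unordered pairs. -/
noncomputable def edges (n : ℕ) : Finset (Sym2 (Fin n)) :=
  Finset.univ.filter fun e => ¬ e.IsDiag

/-- The unordered pairs `e, f, g` form the three edges of a triangle. -/
def IsTriangleEdges {n : ℕ} (e f g : Sym2 (Fin n)) : Prop :=
  ∃ u v w : Fin n, u ≠ v ∧ v ≠ w ∧ u ≠ w ∧ e = s(u, v) ∧ f = s(v, w) ∧ g = s(u, w)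

/-- `X G` is the number of triangles (3-cliques) of `G`. -/
noncomputable def X {n : ℕ} (G : Graph n) : ℕ :=
  Nat.card {T : Finset (Fin n) // T.card = 3 ∧ ∀ u ∈ T, ∀ v ∈ T, u ≠ v → G s(u, v) = true}

/-- `Y G e` is the number of (unordered) sets `{f, g}` of edges of `G` such that
`{e, f, g}` is a triangle. -/
noncomputable def Y {n : ℕ} (G : Graph n) (e : Sym2 (Fin n)) : ℕ :=
  Nat.card {P : Sym2 (Sym2 (Fin n)) //
    ∃ f g, P = s(f, g) ∧ G f = true ∧ G g = true ∧ IsTriangleEdges e f g}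

/-- `Z G e = Y G e` if `e` is an edge of `G`, and `0` otherwise. -/
noncomputable def Z {n : ℕ} (G : Graph n) (e : Sym2 (Fin n)) : ℕ :=
  if G e = true then Y G e else 0

/-- The Bernoulli measure with parameter `p` on `Bool`. -/
noncomputable def bern (p : ℝ) : Measure Bool :=
  ENNReal.ofReal p • Measure.dirac true + ENNReal.ofReal (1 - p) • Measure.dirac false

/-- The product of independent Bernoulli(`p`) coin flips, one for each unordered pair
of vertices.  Under this measure, the identity map `ω ↦ ω` is the random graph `G(n,p)`,
and `ω ↦ sparsify G ω` is the `p`-sparsification of `G`. -/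
noncomputable def edgeMeasure (n : ℕ) (p : ℝ) : Measure (Sym2 (Fin n) → Bool) :=
  Measure.pi fun _ => bern p

/-- The sparsification of `G` determined by the retention choices `ω`. -/
def sparsify {n : ℕ} (G : Graph n) (ω : Sym2 (Fin n) → Bool) : Graph n :=
  fun e => G e && ω e

/-- `G` with the edge `e` removed. -/
def removeEdge {n : ℕ} (G : Graph n) (e : Sym2 (Fin n)) : Graph n :=
  fun f => if f = e then false else G f

open scoped Classical in
/-- The unordered pairs `{f, g}` of edges of `G` forming a triangle together with `e`. -/
noncomputable def trianglePairs {n : ℕ} (G : Graph n) (e : Sym2 (Fin n)) :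
    Finset (Sym2 (Sym2 (Fin n))) :=
  Finset.univ.filter fun P => ∃ f g, P = s(f, g) ∧ G f = true ∧ G g = true ∧
    IsTriangleEdges e f g

/-- `pairCost h` sends the unordered pair `{f, g}` to `2 * h f + 2 * h g + 2`. -/
noncomputable def pairCost {n : ℕ} (h : Sym2 (Fin n) → ℝ) : Sym2 (Sym2 (Fin n)) → ℝ :=
  Sym2.lift ⟨fun f g => 2 * h f + 2 * h g + 2, fun f g => by ring⟩


open scoped ENNReal

lemma lintegral_bern (p : ℝ) (f : Bool → ℝ≥0∞) :
    ∫⁻ b, f b ∂bern p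
      = ENNReal.ofReal p * f true + ENNReal.ofReal (1 - p) * f false := by
  simp [bern, lintegral_add_measure, lintegral_smul_measure, lintegral_dirac]

instance bern_finite (p : ℝ) : IsFiniteMeasure (bern p) := by
  constructor
  have := lintegral_bern p (fun _ => 1)
  simp only [lintegral_one] at this
  rw [this]
  simp [ENNReal.add_lt_top]

lemma bern_prob {p : ℝ} (h0 : 0 ≤ p) (h1 : p ≤ 1) : IsProbabilityMeasure (bern p) := by
  constructor
  have := lintegral_bern p (fun _ => 1)
  simp only [lintegral_one] at this
  rw [this, mul_one, mul_one, ← ENNReal.ofReal_add h0 (by linarith)]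
  norm_num

lemma pi_bern_univ {σ : Type*} [Fintype σ] {p : ℝ} (h0 : 0 ≤ p) (h1 : p ≤ 1) :
    Measure.pi (fun _ : σ => bern p) Set.univ = 1 := by
  haveI : ∀ i : σ, IsProbabilityMeasure ((fun _ : σ => bern p) i) := fun _ => bern_prob h0 h1
  exact measure_univ

/-- the per-pair factor of the moment generating function -/
noncomputable def D (p : ℝ) (R : ℝ≥0∞) : ℝ≥0∞ :=
  ENNReal.ofReal p * ENNReal.ofReal p * R
    + (ENNReal.ofReal p * ENNReal.ofReal (1 - p)
      + ENNReal.ofReal (1 - p) * ENNReal.ofReal p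
      + ENNReal.ofReal (1 - p) * ENNReal.ofReal (1 - p))

variable {ι : Type*} [Fintype ι] [DecidableEq ι]

/-- single pair factor -/
noncomputable def pf (c d : ι) (R : ℝ≥0∞) (ω : ι → Bool) : ℝ≥0∞ := if ω c && ω d then R else 1

lemma lmarginal_pf_mul {p : ℝ} {t : Finset ι} {c d : ι} (hc : c ∉ t) (hd : d ∉ t)
    (R : ℝ≥0∞) (F : (ι → Bool) → ℝ≥0∞) :
    (∫⋯∫⁻_t, (fun ω => pf c d R ω * F ω) ∂(fun _ => bern p))
      = fun y => pf c d R y * (∫⋯∫⁻_t, F ∂(fun _ => bern p)) y := by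
  funext y
  simp only [lmarginal]
  have h1 : ∀ z : (i : ↥t) → Bool, Function.updateFinset y t z c = y c := by
    intro z; simp [Function.updateFinset_def, hc]
  have h2 : ∀ z : (i : ↥t) → Bool, Function.updateFinset y t z d = y d := by
    intro z; simp [Function.updateFinset_def, hd]
  have : ∀ z : (i : ↥t) → Bool,
      pf c d R (Function.updateFinset y t z) * F (Function.updateFinset y t z)
        = pf c d R y * F (Function.updateFinset y t z) := by
    intro z; rw [pf, pf, h1, h2]
  simp_rw [this]
  exact lintegral_const_mul _ (measurable_of_countable _)

lemma lmarginal_pf_pair (p : ℝ) {c d : ι} (hcd : c ≠ d) (R C : ℝ≥0∞) (x : ι → Bool) :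
    (∫⋯∫⁻_{c, d}, (fun y => pf c d R y * C) ∂(fun _ => bern p)) x = D p R * C := by
  have hc : c ∉ ({d} : Finset ι) := by simp [hcd]
  rw [show ({c, d} : Finset ι) = insert c {d} from rfl,
    lmarginal_insert _ (measurable_of_countable _) hc]
  simp_rw [lmarginal_singleton]
  have key : ∀ (xc xd : Bool),
      pf c d R (Function.update (Function.update x c xc) d xd)
        = (if xc && xd then R else 1) := by
    intro xc xd
    rw [pf, Function.update_of_ne hcd, Function.update_self, Function.update_self]
  simp_rw [key, lintegral_bern]
  simp only [Bool.and_true, Bool.and_false, Bool.true_and, Bool.false_and, if_true,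
    Bool.and_self, Bool.false_eq_true, reduceIte, if_false]
  rw [D]; ring

lemma lmarginal_prod_pf {V : Type*} [DecidableEq V] (p : ℝ) (R : ℝ≥0∞) (a b : V → ι) :
    ∀ (S : Finset V), (∀ v ∈ S, a v ≠ b v) →
    (∀ v ∈ S, ∀ w ∈ S, v ≠ w → a v ≠ a w ∧ a v ≠ b w ∧ b v ≠ a w ∧ b v ≠ b w) →
    (∫⋯∫⁻_(S.biUnion fun v => {a v, b v}),
        (fun ω => ∏ v ∈ S, pf (a v) (b v) R ω) ∂(fun _ => bern p))
      = fun _ => D p R ^ S.card := by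
  intro S
  induction S using Finset.induction_on with
  | empty => intro _ _; funext x; simp
  | @insert v₀ S hv₀ IH =>
    intro hab hdisj
    have hab' : ∀ v ∈ S, a v ≠ b v := fun v hv => hab v (Finset.mem_insert_of_mem hv)
    have hdisj' : ∀ v ∈ S, ∀ w ∈ S, v ≠ w →
        a v ≠ a w ∧ a v ≠ b w ∧ b v ≠ a w ∧ b v ≠ b w := fun v hv w hw =>
      hdisj v (Finset.mem_insert_of_mem hv) w (Finset.mem_insert_of_mem hw)
    have hnotT : ∀ x ∈ ({a v₀, b v₀} : Finset ι),
        x ∉ S.biUnion fun v => {a v, b v} := by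
      intro x hx hxT
      rcases Finset.mem_biUnion.mp hxT with ⟨w, hw, hxw⟩
      have hne : v₀ ≠ w := fun h => hv₀ (h ▸ hw)
      obtain ⟨h1, h2, h3, h4⟩ :=
        hdisj v₀ (Finset.mem_insert_self _ _) w (Finset.mem_insert_of_mem hw) hne
      simp only [Finset.mem_insert, Finset.mem_singleton] at hx hxw
      rcases hx with rfl | rfl <;> rcases hxw with h | h <;> simp_all
    have hdis : Disjoint ({a v₀, b v₀} : Finset ι) (S.biUnion fun v => {a v, b v}) :=
      Finset.disjoint_left.mpr hnotT
    have hprod : (fun ω => ∏ v ∈ insert v₀ S, pf (a v) (b v) R ω)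
        = fun ω => pf (a v₀) (b v₀) R ω * ∏ v ∈ S, pf (a v) (b v) R ω := by
      funext ω; exact Finset.prod_insert hv₀
    rw [Finset.biUnion_insert, lmarginal_union _ _ (measurable_of_countable _) hdis, hprod]
    have ha₀ : a v₀ ∉ S.biUnion fun v => {a v, b v} := hnotT _ (by simp)
    have hb₀ : b v₀ ∉ S.biUnion fun v => {a v, b v} := hnotT _ (by simp)
    rw [lmarginal_pf_mul ha₀ hb₀]
    have IH' := IH hab' hdisj'
    funext x
    simp only [IH']
    rw [lmarginal_pf_pair p (hab v₀ (Finset.mem_insert_self _ _)) R _ x,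
      Finset.card_insert_of_notMem hv₀, pow_succ]
    ring

lemma lintegral_prod_pf {V : Type*} [DecidableEq V] (p : ℝ) (h0 : 0 ≤ p) (h1 : p ≤ 1)
    (R : ℝ≥0∞) (a b : V → ι) (S : Finset V) (hab : ∀ v ∈ S, a v ≠ b v)
    (hdisj : ∀ v ∈ S, ∀ w ∈ S, v ≠ w → a v ≠ a w ∧ a v ≠ b w ∧ b v ≠ a w ∧ b v ≠ b w) :
    ∫⁻ ω, ∏ v ∈ S, pf (a v) (b v) R ω ∂(Measure.pi fun _ : ι => bern p)
      = D p R ^ S.card := by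
  have hmar : (∫⋯∫⁻_(S.biUnion fun v => {a v, b v}),
        (fun ω => ∏ v ∈ S, pf (a v) (b v) R ω) ∂(fun _ : ι => bern p))
      = ∫⋯∫⁻_(S.biUnion fun v => {a v, b v}),
        (fun _ => D p R ^ S.card) ∂(fun _ : ι => bern p) := by
    rw [lmarginal_prod_pf p R a b S hab hdisj]
    funext x
    simp only [lmarginal]
    rw [lintegral_const, pi_bern_univ h0 h1, mul_one]
  rw [lintegral_eq_of_lmarginal_eq _ (measurable_of_countable _)
      (measurable_of_countable _) hmar, lintegral_const, pi_bern_univ h0 h1, mul_one]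


lemma chernoff_pairs {V : Type*} [DecidableEq V] {p : ℝ} (h0 : 0 ≤ p) (h1 : p ≤ 1)
    {s : ℝ} (hs : 0 < s) (B : ℝ) (a b : V → ι) (S : Finset V)
    (hab : ∀ v ∈ S, a v ≠ b v)
    (hdisj : ∀ v ∈ S, ∀ w ∈ S, v ≠ w → a v ≠ a w ∧ a v ≠ b w ∧ b v ≠ a w ∧ b v ≠ b w) :
    Measure.pi (fun _ : ι => bern p)
        {ω | B < ((S.filter fun v => ω (a v) && ω (b v)).card : ℝ)}
      ≤ ENNReal.ofReal (Real.exp ((S.card : ℝ) * (p ^ 2 * (Real.exp s - 1)) - s * B)) := by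
  set R : ℝ≥0∞ := ENNReal.ofReal (Real.exp s) with hR
  set f : (ι → Bool) → ℝ≥0∞ := fun ω => ∏ v ∈ S, pf (a v) (b v) R ω with hf
  have hfval : ∀ ω, f ω
      = ENNReal.ofReal (Real.exp (s * ((S.filter fun v => ω (a v) && ω (b v)).card : ℝ))) := by
    intro ω
    have : f ω = R ^ (S.filter fun v => ω (a v) && ω (b v)).card := by
      simp only [hf, pf]
      rw [Finset.prod_ite, Finset.prod_const, Finset.prod_const, one_pow, mul_one]
    rw [this, hR, ← ENNReal.ofReal_pow (Real.exp_nonneg s), ← Real.exp_nat_mul]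
    ring_nf
  have hsub : {ω : ι → Bool | B < ((S.filter fun v => ω (a v) && ω (b v)).card : ℝ)}
      ⊆ {ω | ENNReal.ofReal (Real.exp (s * B)) ≤ f ω} := by
    intro ω hω
    simp only [Set.mem_setOf_eq] at hω ⊢
    rw [hfval ω]
    exact ENNReal.ofReal_le_ofReal (Real.exp_le_exp.mpr
      (mul_le_mul_of_nonneg_left hω.le hs.le))
  have hmarkov := mul_meas_ge_le_lintegral₀ (μ := Measure.pi fun _ : ι => bern p)
    (f := f) (measurable_of_countable f).aemeasurable (ENNReal.ofReal (Real.exp (s * B)))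
  have hint : ∫⁻ ω, f ω ∂(Measure.pi fun _ : ι => bern p) = D p R ^ S.card :=
    lintegral_prod_pf p h0 h1 R a b S hab hdisj
  have hD : D p R ≤ ENNReal.ofReal (Real.exp (p ^ 2 * (Real.exp s - 1))) := by
    have h1p : (0:ℝ) ≤ 1 - p := by linarith
    have : D p R = ENNReal.ofReal
        (p * p * Real.exp s + (p * (1 - p) + (1 - p) * p + (1 - p) * (1 - p))) := by
      rw [D, hR]
      rw [ENNReal.ofReal_add (by positivity) (by positivity),
        ENNReal.ofReal_add (by positivity) (by positivity),
        ENNReal.ofReal_add (by positivity) (by positivity),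
        ENNReal.ofReal_mul (by positivity), ENNReal.ofReal_mul h0,
        ENNReal.ofReal_mul h0, ENNReal.ofReal_mul h1p, ENNReal.ofReal_mul h1p]
    rw [this]
    apply ENNReal.ofReal_le_ofReal
    have key : p * p * Real.exp s + (p * (1 - p) + (1 - p) * p + (1 - p) * (1 - p))
        = 1 + p ^ 2 * (Real.exp s - 1) := by ring
    rw [key]
    have := Real.add_one_le_exp (p ^ 2 * (Real.exp s - 1))
    linarith
  have hDpow : D p R ^ S.card
      ≤ ENNReal.ofReal (Real.exp ((S.card : ℝ) * (p ^ 2 * (Real.exp s - 1)))) := by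
    calc D p R ^ S.card ≤ ENNReal.ofReal (Real.exp (p ^ 2 * (Real.exp s - 1))) ^ S.card :=
          pow_le_pow_left' hD _
      _ = ENNReal.ofReal (Real.exp ((S.card : ℝ) * (p ^ 2 * (Real.exp s - 1)))) := by
          rw [← ENNReal.ofReal_pow (Real.exp_nonneg _), ← Real.exp_nat_mul]
  have hc0 : ENNReal.ofReal (Real.exp (s * B)) ≠ 0 := by
    simp [ENNReal.ofReal_eq_zero, not_le, Real.exp_pos]
  have hctop : ENNReal.ofReal (Real.exp (s * B)) ≠ ⊤ := ENNReal.ofReal_ne_top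
  calc Measure.pi (fun _ : ι => bern p)
        {ω | B < ((S.filter fun v => ω (a v) && ω (b v)).card : ℝ)}
      ≤ Measure.pi (fun _ : ι => bern p) {ω | ENNReal.ofReal (Real.exp (s * B)) ≤ f ω} :=
        measure_mono hsub
    _ = (ENNReal.ofReal (Real.exp (s * B)))⁻¹ * (ENNReal.ofReal (Real.exp (s * B))
          * Measure.pi (fun _ : ι => bern p) {ω | ENNReal.ofReal (Real.exp (s * B)) ≤ f ω}) := by
        rw [← mul_assoc, ENNReal.inv_mul_cancel hc0 hctop, one_mul]
    _ ≤ (ENNReal.ofReal (Real.exp (s * B)))⁻¹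
          * ENNReal.ofReal (Real.exp ((S.card : ℝ) * (p ^ 2 * (Real.exp s - 1)))) := by
        refine mul_le_mul_right (le_trans hmarkov ?_) _
        rw [hint]; exact hDpow
    _ = ENNReal.ofReal (Real.exp ((S.card : ℝ) * (p ^ 2 * (Real.exp s - 1)) - s * B)) := by
        rw [← ENNReal.ofReal_inv_of_pos (Real.exp_pos _), ← Real.exp_neg,
          ← ENNReal.ofReal_mul (Real.exp_nonneg _), ← Real.exp_add]
        ring_nf

open Classical in
/-- the base finset of potential apexes -/
noncomputable def apexes {n : ℕ} (G : Graph n) (u w : Fin n) : Finset (Fin n) :=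
  Finset.univ.filter fun v => G s(u,v) = true ∧ G s(v,w) = true ∧ v ≠ u ∧ v ≠ w

lemma mem_apexes {n : ℕ} {G : Graph n} {u w v : Fin n} :
    v ∈ apexes G u w ↔ G s(u,v) = true ∧ G s(v,w) = true ∧ v ≠ u ∧ v ≠ w := by
  simp [apexes]

lemma card_apexes_le_Y {n : ℕ} (G : Graph n) (u w : Fin n) (huw : u ≠ w) :
    (apexes G u w).card ≤ Y G s(u,w) := by
  classical
  rw [Y, ← Nat.card_eq_finsetCard]
  have hmem : ∀ v : Fin n, v ∈ apexes G u w →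
      ∃ f g, s(s(w,v),s(u,v)) = s(f,g) ∧ G f = true ∧ G g = true ∧
        IsTriangleEdges s(u,w) f g := by
    intro v hv
    obtain ⟨h1, h2, h3, h4⟩ := mem_apexes.mp hv
    refine ⟨s(w,v), s(u,v), rfl, ?_, h1, u, w, v, huw, Ne.symm h4, Ne.symm h3, rfl, rfl, rfl⟩
    rwa [Sym2.eq_swap]
  apply Nat.card_le_card_of_injective
    (fun v : ↥(apexes G u w) => (⟨s(s(w,(v:Fin n)),s(u,(v:Fin n))), hmem _ v.2⟩ :
      {P : Sym2 (Sym2 (Fin n)) //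
        ∃ f g, P = s(f, g) ∧ G f = true ∧ G g = true ∧ IsTriangleEdges s(u,w) f g}))
  intro v v' h
  obtain ⟨-, -, h3, h4⟩ := mem_apexes.mp v.2
  obtain ⟨-, -, h3', h4'⟩ := mem_apexes.mp v'.2
  have h0 : s(s(w,(v:Fin n)),s(u,(v:Fin n))) = s(s(w,(v':Fin n)),s(u,(v':Fin n))) :=
    congrArg Subtype.val h
  rw [Sym2.eq_iff] at h0
  apply Subtype.ext
  rcases h0 with ⟨hA, -⟩ | ⟨hA, hB⟩
  · rw [Sym2.eq_iff] at hA
    rcases hA with ⟨-, hv⟩ | ⟨hw, -⟩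
    · exact hv
    · exact absurd hw.symm h4'
  · rw [Sym2.eq_iff] at hA
    rcases hA with ⟨hwu, -⟩ | ⟨hw, -⟩
    · exact absurd hwu.symm huw
    · exact absurd hw.symm h4'

lemma Y_sparsify_le {n : ℕ} (G : Graph n) (ω : Sym2 (Fin n) → Bool) (u w : Fin n) :
    Y (sparsify G ω) s(u,w)
      ≤ ((apexes G u w).filter fun v => ω s(u,v) && ω s(v,w)).card := by
  classical
  rw [Y, ← Nat.card_eq_finsetCard]
  set FF := (apexes G u w).filter fun v => ω s(u,v) && ω s(v,w) with hFF
  have key : ∀ P : {P : Sym2 (Sym2 (Fin n)) //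
      ∃ f g, P = s(f, g) ∧ sparsify G ω f = true ∧ sparsify G ω g = true ∧
        IsTriangleEdges s(u,w) f g},
      ∃ t : Fin n, t ∈ FF ∧ P.1 = s(s(w,t),s(u,t)) := by
    rintro ⟨P, f, g, hP, hf, hg, u', v', w', h12, h23, h13, he, hfe, hge⟩
    obtain ⟨hGf, hωf⟩ : G f = true ∧ ω f = true := by simpa [sparsify] using hf
    obtain ⟨hGg, hωg⟩ : G g = true ∧ ω g = true := by simpa [sparsify] using hg
    rw [hfe] at hGf hωf
    rw [hge] at hGg hωg
    rw [Sym2.eq_iff] at he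
    rcases he with ⟨hu, hv⟩ | ⟨hu, hv⟩
    · -- u = u', w = v'
      subst hu; subst hv
      refine ⟨w', ?_, ?_⟩
      · rw [hFF, Finset.mem_filter]
        constructor
        · rw [mem_apexes]
          exact ⟨hGg, by rwa [Sym2.eq_swap], Ne.symm h13, Ne.symm h23⟩
        · simp only [Bool.and_eq_true]
          exact ⟨hωg, by rwa [Sym2.eq_swap]⟩
      · show P = s(s(w,w'),s(u,w'))
        rw [hP, hfe, hge]
    · -- u = v', w = u'
      subst hu; subst hv
      refine ⟨w', ?_, ?_⟩
      · rw [hFF, Finset.mem_filter]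
        constructor
        · rw [mem_apexes]
          exact ⟨hGf, by rwa [Sym2.eq_swap], Ne.symm h23, Ne.symm h13⟩
        · simp only [Bool.and_eq_true]
          exact ⟨hωf, by rwa [Sym2.eq_swap]⟩
      · show P = s(s(w,w'),s(u,w'))
        rw [hP, hfe, hge]
        exact Sym2.eq_swap
  choose t hmem hPeq using key
  apply Nat.card_le_card_of_injective (fun P => (⟨t P, hmem P⟩ : ↥FF))
  intro P Q h
  have : t P = t Q := congrArg Subtype.val h
  apply Subtype.ext
  rw [hPeq P, hPeq Q, this]

lemma exp_quad {s : ℝ} (hs0 : 0 ≤ s) (hs1 : s ≤ 1/4) : Real.exp s - 1 ≤ s + s ^ 2 := by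
  have habs : |s| ≤ 1 := by rw [abs_of_nonneg hs0]; linarith
  have h := Real.exp_bound habs (by norm_num : 0 < 2)
  have h2 := (abs_le.mp h).2
  simp only [Finset.sum_range_succ, Finset.sum_range_zero] at h2
  norm_num at h2
  have habs2 : |s| ^ 2 = s ^ 2 := sq_abs s
  nlinarith [sq_nonneg s]

lemma core2 {lam q M s N B ε : ℝ}
    (hlam : 80 ≤ lam) (hε0 : 0 < ε) (hε : ε ≤ 1/1000)
    (hq0 : 0 ≤ q) (hqM : q ≤ M) (hlM : lam ≤ M) (hM : M = q ∨ M = lam)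
    (hs0 : 0 < s) (hs1 : s ≤ 1/4) (hsM : s * (4 * M) = lam)
    (hN0 : 0 ≤ N) (hNe : N * ε ^ 2 ≤ q ^ 2 + ε * lam * q + ε ^ 2 * lam ^ 2)
    (hB1 : q ^ 2 + lam * q ≤ B) (hB2 : lam ^ 2 ≤ B) :
    N * (ε ^ 2 * (Real.exp s - 1)) - s * B ≤ -(lam ^ 2 / 20) := by
  have hl0 : (0:ℝ) < lam := by linarith
  have hM0 : (0:ℝ) < M := lt_of_lt_of_le hl0 hlM
  have hexp := exp_quad hs0.le hs1
  have hε2 : ε ^ 2 ≤ 1/1000 := by nlinarith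
  have hsM4 : s * M = lam / 4 := by linear_combination (1/4 : ℝ) * hsM
  have hlMM : lam * lam ≤ M * M := mul_le_mul hlM hlM hl0.le hM0.le
  have hgap : N * ε ^ 2 - B ≤ -(49/100) * (lam * M) := by
    rcases hM with hMq | hMl
    · rw [hMq] at hlM ⊢
      have f0 : 0 < lam * q := by
        have : 0 < q := lt_of_lt_of_le hl0 hlM
        positivity
      have f1 : ε * (lam * q) ≤ (1/1000) * (lam * q) :=
        mul_le_mul_of_nonneg_right hε f0.le
      have f2 : ε ^ 2 * lam ^ 2 ≤ (1/1000) * lam ^ 2 :=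
        mul_le_mul_of_nonneg_right hε2 (sq_nonneg lam)
      have f3 : lam * lam ≤ lam * q := mul_le_mul_of_nonneg_left hlM hl0.le
      linarith
    · rw [hMl] at hqM ⊢
      have f0 : 0 < lam * lam := mul_pos hl0 hl0
      have f1 : q * q ≤ lam * q := mul_le_mul_of_nonneg_right hqM hq0
      have f2 : lam * q ≤ lam * lam := mul_le_mul_of_nonneg_left hqM hl0.le
      have f3 : ε * (lam * q) ≤ (1/1000) * (lam * q) :=
        mul_le_mul_of_nonneg_right hε (by positivity)
      have f4 : ε ^ 2 * lam ^ 2 ≤ (1/1000) * lam ^ 2 :=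
        mul_le_mul_of_nonneg_right hε2 (sq_nonneg lam)
      have f5 : 0 ≤ lam * q := by positivity
      linarith
  have hgapS : s * (N * ε ^ 2) - s * B ≤ -(49/400) * lam ^ 2 := by
    have h := mul_le_mul_of_nonneg_left hgap hs0.le
    have h2 : s * (lam * M) = lam * (lam / 4) := by
      rw [show s * (lam * M) = lam * (s * M) from by ring, hsM4]
    linarith
  have hNM : N * ε ^ 2 ≤ (1002/1000) * (M * M) := by
    have c1 : q * q ≤ M * M := mul_le_mul hqM hqM hq0 hM0.le
    have c2a : lam * q ≤ M * M := mul_le_mul hlM hqM hq0 hM0.le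
    have c2 : ε * (lam * q) ≤ (1/1000) * (M * M) :=
      le_trans (mul_le_mul_of_nonneg_left c2a hε0.le)
        (mul_le_mul_of_nonneg_right hε (by positivity))
    have c3 : ε ^ 2 * lam ^ 2 ≤ (1/1000) * (M * M) :=
      le_trans (by nlinarith) (mul_le_mul_of_nonneg_right hε2 (by positivity))
    linarith
  have hs2M : s ^ 2 * (M * M) = lam ^ 2 / 16 := by
    linear_combination (s * M + lam / 4) * hsM4
  have hC : (N * ε ^ 2) * s ^ 2 ≤ (1002/1000) * (lam ^ 2 / 16) := by
    have h := mul_le_mul_of_nonneg_right hNM (sq_nonneg s)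
    linarith [h, hs2M]
  have e1 : N * (ε ^ 2 * (Real.exp s - 1)) ≤ (N * ε ^ 2) * s + (N * ε ^ 2) * s ^ 2 := by
    have h := mul_le_mul_of_nonneg_left hexp (by positivity : (0:ℝ) ≤ N * ε ^ 2)
    linarith [h]
  linarith [e1, hgapS, hC, sq_nonneg lam]

lemma analytic {lam ε K : ℝ} (hlam : 80 ≤ lam) (hε0 : 0 < ε) (hε : ε ≤ 1/1000)
    (hK : 0 ≤ K) :
    ∃ s : ℝ, 0 < s ∧
      max (K + lam * Real.sqrt K) (lam ^ 2) * (ε ^ 2 * (Real.exp s - 1))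
        - s * max (ε ^ 2 * K + lam * Real.sqrt (ε ^ 2 * K)) (lam ^ 2)
      ≤ -(lam ^ 2 / 20) := by
  have hl0 : (0:ℝ) < lam := by linarith
  have hr0 : 0 ≤ Real.sqrt K := Real.sqrt_nonneg K
  have h1 : K = Real.sqrt K ^ 2 := (Real.sq_sqrt hK).symm
  have h2 : Real.sqrt (ε ^ 2 * K) = ε * Real.sqrt K := by
    rw [Real.sqrt_mul (sq_nonneg ε), Real.sqrt_sq hε0.le]
  have h3 : ε ^ 2 * K = (ε * Real.sqrt K) ^ 2 :=
    (by rw [mul_pow, Real.sq_sqrt hK] : (ε * Real.sqrt K) ^ 2 = ε ^ 2 * K).symm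
  have hqM : ε * Real.sqrt K ≤ max (ε * Real.sqrt K) lam := le_max_left _ _
  have hlM : lam ≤ max (ε * Real.sqrt K) lam := le_max_right _ _
  have hM0 : (0:ℝ) < max (ε * Real.sqrt K) lam := lt_of_lt_of_le hl0 hlM
  refine ⟨lam / (4 * max (ε * Real.sqrt K) lam), by positivity, ?_⟩
  rw [h2, h3]
  have hsM : (lam / (4 * max (ε * Real.sqrt K) lam)) * (4 * max (ε * Real.sqrt K) lam)
      = lam := div_mul_cancel₀ _ (by positivity)
  refine core2 hlam hε0 hε (by positivity) hqM hlM (max_choice _ _) (by positivity) ?_ hsM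
    (le_trans (sq_nonneg lam) (le_max_right _ _)) ?_ (le_max_left _ _) (le_max_right _ _)
  · rw [div_le_iff₀ (by positivity)]
    nlinarith
  · have hmax : max (K + lam * Real.sqrt K) (lam ^ 2)
        ≤ K + lam * Real.sqrt K + lam ^ 2 :=
      max_le (le_add_of_nonneg_right (sq_nonneg lam))
        (le_add_of_nonneg_left (by positivity))
    calc max (K + lam * Real.sqrt K) (lam ^ 2) * ε ^ 2
        ≤ (K + lam * Real.sqrt K + lam ^ 2) * ε ^ 2 :=
          mul_le_mul_of_nonneg_right hmax (sq_nonneg ε)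
      _ = (ε * Real.sqrt K) ^ 2 + ε * lam * (ε * Real.sqrt K) + ε ^ 2 * lam ^ 2 := by
          linear_combination ε ^ 2 * h1

lemma per_edge {n : ℕ} (G : Graph n) {p : ℝ} (h0 : 0 ≤ p) (h1 : p ≤ 1)
    {s : ℝ} (hs : 0 < s) (B N : ℝ) (e : Sym2 (Fin n)) (he : ¬ e.IsDiag)
    (hY : (Y G e : ℝ) ≤ N) :
    edgeMeasure n p {ω | B < (Y (sparsify G ω) e : ℝ)}
      ≤ ENNReal.ofReal (Real.exp (N * (p ^ 2 * (Real.exp s - 1)) - s * B)) := by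
  classical
  induction e using Sym2.ind with
  | _ u w =>
  have huw : u ≠ w := by simpa using he
  set S₀ := apexes G u w with hS₀
  have hab : ∀ v ∈ S₀, s(u,v) ≠ s(v,w) := by
    intro v hv heq
    obtain ⟨-, -, h3, h4⟩ := mem_apexes.mp hv
    rw [Sym2.eq_iff] at heq
    rcases heq with ⟨hA, -⟩ | ⟨hA, -⟩
    · exact h3 hA.symm
    · exact huw hA
  have hdisj : ∀ v ∈ S₀, ∀ v' ∈ S₀, v ≠ v' →
      s(u,v) ≠ s(u,v') ∧ s(u,v) ≠ s(v',w) ∧ s(v,w) ≠ s(u,v') ∧ s(v,w) ≠ s(v',w) := by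
    intro v hv v' hv' hne
    obtain ⟨-, -, h3, h4⟩ := mem_apexes.mp hv
    obtain ⟨-, -, h3', h4'⟩ := mem_apexes.mp hv'
    refine ⟨?_, ?_, ?_, ?_⟩ <;> intro heq <;> rw [Sym2.eq_iff] at heq
    · rcases heq with ⟨-, hB⟩ | ⟨hA, -⟩
      · exact hne hB
      · exact h3' hA.symm
    · rcases heq with ⟨-, hB⟩ | ⟨hA, -⟩
      · exact h4 hB
      · exact huw hA
    · rcases heq with ⟨hA, -⟩ | ⟨-, hB⟩
      · exact h3 hA
      · exact huw hB.symm
    · rcases heq with ⟨hA, -⟩ | ⟨hA, -⟩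
      · exact hne hA
      · exact h4 hA
  have hsub : {ω : Sym2 (Fin n) → Bool | B < (Y (sparsify G ω) s(u,w) : ℝ)}
      ⊆ {ω | B < ((S₀.filter fun v => ω s(u,v) && ω s(v,w)).card : ℝ)} := by
    intro ω hω
    simp only [Set.mem_setOf_eq] at hω ⊢
    refine lt_of_lt_of_le hω ?_
    exact_mod_cast Y_sparsify_le G ω u w
  have hcard : ((S₀.card : ℝ)) * (p ^ 2 * (Real.exp s - 1)) - s * B
      ≤ N * (p ^ 2 * (Real.exp s - 1)) - s * B := by
    have h1 : (S₀.card : ℝ) ≤ N := by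
      refine le_trans ?_ hY
      exact_mod_cast card_apexes_le_Y G u w huw
    have h2 : (0:ℝ) ≤ p ^ 2 * (Real.exp s - 1) := by
      have : (1:ℝ) ≤ Real.exp s := by
        rw [← Real.exp_zero]; exact Real.exp_le_exp.mpr hs.le
      nlinarith [sq_nonneg p]
    nlinarith [mul_le_mul_of_nonneg_right h1 h2]
  calc edgeMeasure n p {ω | B < (Y (sparsify G ω) s(u,w) : ℝ)}
      ≤ edgeMeasure n p {ω | B < ((S₀.filter fun v => ω s(u,v) && ω s(v,w)).card : ℝ)} :=
        measure_mono hsub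
    _ ≤ ENNReal.ofReal (Real.exp ((S₀.card : ℝ) * (p ^ 2 * (Real.exp s - 1)) - s * B)) :=
        chernoff_pairs h0 h1 hs B (fun v => s(u,v)) (fun v => s(v,w)) S₀ hab hdisj
    _ ≤ ENNReal.ofReal (Real.exp (N * (p ^ 2 * (Real.exp s - 1)) - s * B)) :=
        ENNReal.ofReal_le_ofReal (Real.exp_le_exp.mpr hcard)

/-- the second consequence of the iteration lemma: with probability at
least `1 - 2 * exp (-c₀ * λ²)`, the bound on `Y e` propagates to the sparsification,
simultaneously for all edges `e` of `K_n`. -/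
theorem iteration_second_consequence :
    ∃ c₀ : ℝ, 0 < c₀ ∧ ∃ C : ℝ, 0 < C ∧ ∀ᶠ n : ℕ in atTop,
      ∀ (lam ε : ℝ) (i : ℕ) (G : Graph n),
        C * Real.log n ≤ lam →
        0 < ε → ε ≤ 1 / 1000 →
        (∀ e ∈ edges n, (Y G e : ℝ)
          ≤ max (4 * (n : ℝ) * ε ^ (2 * i) + lam * Real.sqrt (4 * (n : ℝ) * ε ^ (2 * i)))
              (lam ^ 2)) →
        ENNReal.ofReal (1 - 2 * Real.exp (-(c₀ * lam ^ 2))) ≤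
          edgeMeasure n ε
            {ω | ∀ e ∈ edges n, (Y (sparsify G ω) e : ℝ)
              ≤ max (4 * (n : ℝ) * ε ^ (2 * (i + 1))
                    + lam * Real.sqrt (4 * (n : ℝ) * ε ^ (2 * (i + 1)))) (lam ^ 2)} := by
  refine ⟨1/40, by norm_num, 80, by norm_num, ?_⟩
  filter_upwards [Filter.eventually_ge_atTop 3] with n hn3
  intro lam ε i G hlam hε0 hε hY
  have hn3R : (3:ℝ) ≤ (n:ℝ) := by exact_mod_cast hn3
  have hn0 : (0:ℝ) < n := by linarith
  have hln : (1:ℝ) ≤ Real.log n := by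
    rw [Real.le_log_iff_exp_le hn0]
    have := Real.exp_one_lt_d9
    linarith
  have hlam80 : (80:ℝ) ≤ lam := le_trans (by nlinarith) hlam
  have hl0 : (0:ℝ) < lam := by linarith
  have hε1 : ε ≤ 1 := le_trans hε (by norm_num)
  set K : ℝ := 4 * n * ε ^ (2 * i) with hKdef
  have hK0 : 0 ≤ K := by positivity
  have hm : (4 * (n:ℝ) * ε ^ (2 * (i+1))) = ε ^ 2 * K := by
    rw [hKdef, show 2*(i+1) = 2*i + 2 from by ring, pow_add]; ring
  obtain ⟨s, hs0, hsE⟩ := analytic hlam80 hε0 hε hK0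
  set B : ℝ := max (4*(n:ℝ)*ε^(2*(i+1)) + lam * Real.sqrt (4*(n:ℝ)*ε^(2*(i+1)))) (lam^2)
    with hBdef
  set N : ℝ := max (K + lam * Real.sqrt K) (lam ^ 2) with hNdef
  have hBK : B = max (ε^2*K + lam * Real.sqrt (ε^2*K)) (lam^2) := by rw [hBdef, hm]
  have hEXP : N * (ε ^ 2 * (Real.exp s - 1)) - s * B ≤ -(lam^2/20) := by
    rw [hBK]; exact hsE
  have hedge : ∀ e ∈ edges n, edgeMeasure n ε {ω | B < (Y (sparsify G ω) e : ℝ)}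
      ≤ ENNReal.ofReal (Real.exp (-(lam^2/20))) := by
    intro e he
    have hediag : ¬ e.IsDiag := by
      have := (Finset.mem_filter.mp he).2
      simpa using this
    refine le_trans (per_edge G hε0.le hε1 hs0 B N e hediag (hY e he)) ?_
    exact ENNReal.ofReal_le_ofReal (Real.exp_le_exp.mpr hEXP)
  classical
  set Bad : Set (Sym2 (Fin n) → Bool) :=
    ⋃ e ∈ edges n, {ω | B < (Y (sparsify G ω) e : ℝ)} with hBadDef
  have hGood : {ω : Sym2 (Fin n) → Bool | ∀ e ∈ edges n, (Y (sparsify G ω) e : ℝ) ≤ B}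
      = Badᶜ := by
    ext ω
    simp [hBadDef, not_lt]
  have hcardR : ((edges n).card : ℝ) ≤ (n:ℝ)^2 := by
    have h1 : (edges n).card ≤ Fintype.card (Sym2 (Fin n)) := by
      rw [← Finset.card_univ]
      exact Finset.card_le_card (Finset.subset_univ _)
    have hs' : Function.Surjective (fun p : Fin n × Fin n => s(p.1, p.2)) := by
      intro z
      induction z using Sym2.ind with
      | _ x y => exact ⟨(x, y), rfl⟩
    have h2 : Fintype.card (Sym2 (Fin n)) ≤ n^2 := by
      calc Fintype.card (Sym2 (Fin n)) ≤ Fintype.card (Fin n × Fin n) :=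
            Fintype.card_le_of_surjective _ hs'
        _ = n ^ 2 := by simp [sq]
    exact_mod_cast le_trans h1 h2
  have h2ln : 2 * Real.log n ≤ lam^2/40 := by
    have p1 : lam * (80 * Real.log n) ≤ lam * lam :=
      mul_le_mul_of_nonneg_left hlam hl0.le
    have p2 : 80 * (80 * Real.log n) ≤ lam * (80 * Real.log n) :=
      mul_le_mul_of_nonneg_right hlam80 (by positivity)
    nlinarith
  have hBadLe : edgeMeasure n ε Bad ≤ ENNReal.ofReal (2 * Real.exp (-(1/40 * lam^2))) := by
    calc edgeMeasure n ε Bad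
        ≤ ∑ e ∈ edges n, edgeMeasure n ε {ω | B < (Y (sparsify G ω) e : ℝ)} :=
          measure_biUnion_finset_le _ _
      _ ≤ ∑ _e ∈ edges n, ENNReal.ofReal (Real.exp (-(lam^2/20))) :=
          Finset.sum_le_sum hedge
      _ = ((edges n).card : ℝ≥0∞) * ENNReal.ofReal (Real.exp (-(lam^2/20))) := by
          rw [Finset.sum_const, nsmul_eq_mul]
      _ ≤ ENNReal.ofReal (2 * Real.exp (-(1/40 * lam^2))) := by
          rw [← ENNReal.ofReal_natCast ((edges n).card),
            ← ENNReal.ofReal_mul (by positivity)]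
          apply ENNReal.ofReal_le_ofReal
          have hn2 : (n:ℝ)^2 ≤ Real.exp (lam^2/40) := by
            rw [show ((n:ℝ)^2) = Real.exp (Real.log ((n:ℝ)^2)) from
              (Real.exp_log (by positivity)).symm]
            apply Real.exp_le_exp.mpr
            rw [Real.log_pow]
            push_cast
            linarith
          calc ((edges n).card : ℝ) * Real.exp (-(lam^2/20))
              ≤ Real.exp (lam^2/40) * Real.exp (-(lam^2/20)) :=
                mul_le_mul_of_nonneg_right (le_trans hcardR hn2) (Real.exp_nonneg _)
            _ = Real.exp (-(1/40 * lam^2)) := by rw [← Real.exp_add]; ring_nf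
            _ ≤ 2 * Real.exp (-(1/40 * lam^2)) := by
                nlinarith [Real.exp_pos (-(1/40 * lam^2))]
  have hBadMeas : MeasurableSet Bad := (Set.to_countable Bad).measurableSet
  have huniv : edgeMeasure n ε Set.univ = 1 := pi_bern_univ hε0.le hε1
  have hBadTop : edgeMeasure n ε Bad ≠ ⊤ := by
    refine ne_top_of_le_ne_top ?_ (measure_mono (Set.subset_univ Bad))
    rw [huniv]
    exact ENNReal.one_ne_top
  rw [hGood, measure_compl hBadMeas hBadTop, huniv]
  refine le_trans ?_ (tsub_le_tsub_left hBadLe 1)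
  by_cases hcase : 1 - 2 * Real.exp (-(1/40 * lam^2)) ≤ 0
  · rw [ENNReal.ofReal_eq_zero.mpr hcase]
    exact zero_le
  · push_neg at hcase
    refine ENNReal.le_sub_of_add_le_right ENNReal.ofReal_ne_top ?_
    rw [← ENNReal.ofReal_add (by linarith) (by positivity),
      show (1 - 2 * Real.exp (-(1/40 * lam^2))) + 2 * Real.exp (-(1/40 * lam^2)) = 1
        from by ring, ENNReal.ofReal_one]

end RandomTriangles
end

section
/- Let G be a finite simple graph on vertex set {1,…,n}, let e be an edge of G, and let G − e denote G with the edge e removed. Then |Σ_{f ∈ K_n} Z_f(G)² − Σ_{f ∈ K_n} Z_f(G − e)²| ≤ Z_e(G)² + Σ_{{e′,e″}} (2·Z_{e′}(G) + 2·Z_{e″}(G) + 2), where the last sum ranges over all sets {e′, e″} of edges of G such that {e, e′, e″} forms a triangle in G. -/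
open MeasureTheory ProbabilityTheory Real Filter

namespace RandomTriangles

-- AUX START
open Finset
open scoped Classical

variable {n : ℕ}

lemma tri_facts {e f g : Sym2 (Fin n)} (h : IsTriangleEdges e f g) :
    e ≠ f ∧ e ≠ g ∧ f ≠ g ∧ ¬ e.IsDiag ∧ ¬ f.IsDiag ∧ ¬ g.IsDiag := by
  obtain ⟨u, v, w, huv, hvw, huw, he, hf, hg⟩ := h
  subst he hf hg
  refine ⟨?_, ?_, ?_, ?_, ?_, ?_⟩ <;>
    simp [Sym2.eq_iff, Sym2.isDiag_iff_proj_eq] <;> tauto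

lemma tri_swap12 {e f g : Sym2 (Fin n)} (h : IsTriangleEdges e f g) :
    IsTriangleEdges f e g := by
  obtain ⟨u, v, w, huv, hvw, huw, he, hf, hg⟩ := h
  exact ⟨w, v, u, hvw.symm, huv.symm, huw.symm,
    by rw [hf]; exact Sym2.eq_swap, by rw [he]; exact Sym2.eq_swap,
    by rw [hg]; exact Sym2.eq_swap⟩

lemma tri_swap23 {e f g : Sym2 (Fin n)} (h : IsTriangleEdges e f g) :
    IsTriangleEdges e g f := by
  obtain ⟨u, v, w, huv, hvw, huw, he, hf, hg⟩ := h
  exact ⟨v, u, w, huv.symm, huw, hvw,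
    by rw [he]; exact Sym2.eq_swap, hg, hf⟩

noncomputable def Yset (G : Graph n) (f : Sym2 (Fin n)) : Finset (Sym2 (Sym2 (Fin n))) :=
  univ.filter fun P => ∃ g h, P = s(g, h) ∧ G g = true ∧ G h = true ∧ IsTriangleEdges f g h

lemma Y_eq (G : Graph n) (f : Sym2 (Fin n)) : Y G f = (Yset G f).card := by
  rw [Y, Yset, Nat.card_eq_fintype_card]
  convert Fintype.card_subtype _

noncomputable def Tset (G : Graph n) (e f : Sym2 (Fin n)) : Finset (Sym2 (Fin n)) :=
  univ.filter fun g => G f = true ∧ G g = true ∧ IsTriangleEdges e f g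

lemma removeEdge_ne (G : Graph n) {e f : Sym2 (Fin n)} (h : f ≠ e) :
    removeEdge G e f = G f := by simp [removeEdge, h]

lemma Z_remove_le (G : Graph n) {e : Sym2 (Fin n)} {f : Sym2 (Fin n)} (hf : f ≠ e) :
    Z (removeEdge G e) f ≤ Z G f := by
  unfold Z
  rw [removeEdge_ne G hf]
  split
  · rw [Y_eq, Y_eq]
    apply Finset.card_le_card
    intro P hP
    rw [Yset, Finset.mem_filter] at hP ⊢
    obtain ⟨hu, g, h, hP, hg, hh, ht⟩ := hP
    refine ⟨hu, ?_⟩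
    refine ⟨g, h, hP, ?_, ?_, ht⟩
    · by_cases hge : g = e <;> simp_all [removeEdge]
    · by_cases hge : h = e <;> simp_all [removeEdge]
  · exact le_refl 0

lemma Z_drop (G : Graph n) {e : Sym2 (Fin n)} (heG : G e = true)
    {f : Sym2 (Fin n)} (hf : f ≠ e) :
    Z G f ≤ Z (removeEdge G e) f + (Tset G e f).card := by
  unfold Z
  rw [removeEdge_ne G hf]
  split
  case isFalse => simp
  case isTrue hGf =>
  rw [Y_eq, Y_eq]
  have hsub : Yset (removeEdge G e) f ⊆ Yset G f := by
    intro P hP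
    rw [Yset, Finset.mem_filter] at hP ⊢
    obtain ⟨hu, g, h, hP, hg, hh, ht⟩ := hP
    refine ⟨hu, ?_⟩
    refine ⟨g, h, hP, ?_, ?_, ht⟩
    · by_cases hge : g = e <;> simp_all [removeEdge]
    · by_cases hge : h = e <;> simp_all [removeEdge]
  have hdiff : Yset G f \ Yset (removeEdge G e) f ⊆
      (Tset G e f).image (fun h => s(e, h)) := by
    intro P hP
    rw [Finset.mem_sdiff] at hP
    obtain ⟨hP1, hP2⟩ := hP
    rw [Yset, Finset.mem_filter] at hP1
    obtain ⟨-, g, h, hPgh, hg, hh, ht⟩ := hP1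
    by_cases hge : g = e
    · subst hge
      refine Finset.mem_image.2 ⟨h, ?_, hPgh.symm⟩
      rw [Tset, Finset.mem_filter]
      exact ⟨Finset.mem_univ _, hGf, hh, tri_swap12 ht⟩
    · by_cases hhe : h = e
      · subst hhe
        refine Finset.mem_image.2 ⟨g, ?_, by rw [hPgh]; exact Sym2.eq_swap⟩
        rw [Tset, Finset.mem_filter]
        exact ⟨Finset.mem_univ _, hGf, hg, tri_swap12 (tri_swap23 ht)⟩
      · exfalso
        apply hP2
        rw [Yset, Finset.mem_filter]
        exact ⟨Finset.mem_univ _, g, h, hPgh,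
          by rw [removeEdge_ne G hge]; exact hg,
          by rw [removeEdge_ne G hhe]; exact hh, ht⟩
  have h1 : (Yset G f \ Yset (removeEdge G e) f).card + (Yset (removeEdge G e) f).card
      = (Yset G f).card := Finset.card_sdiff_add_card_eq_card hsub
  have h2 : (Yset G f \ Yset (removeEdge G e) f).card ≤ (Tset G e f).card :=
    le_trans (Finset.card_le_card hdiff) (Finset.card_image_le)
  omega

lemma count_sum (G : Graph n) (e : Sym2 (Fin n)) :
    ∑ f ∈ (edges n).erase e, 2 * (Z G f : ℝ) * (Tset G e f).card
      ≤ ∑ P ∈ trianglePairs G e, pairCost (fun f => (Z G f : ℝ)) P := by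
  have hstep1 : ∑ f ∈ (edges n).erase e, 2 * (Z G f : ℝ) * (Tset G e f).card
      = ∑ f : Sym2 (Fin n), ∑ _x ∈ Tset G e f, 2 * (Z G f : ℝ) := by
    rw [← Finset.sum_subset (Finset.subset_univ ((edges n).erase e))]
    · apply Finset.sum_congr rfl
      intro f _
      rw [Finset.sum_const, nsmul_eq_mul]
      ring
    · intro f _ hfne
      have hT : Tset G e f = ∅ := by
        rw [Tset, Finset.filter_eq_empty_iff]
        rintro g - ⟨hGf, hGg, ht⟩
        obtain ⟨hef, -, -, -, hfd, -⟩ := tri_facts ht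
        exact hfne (Finset.mem_erase.2 ⟨fun h => hef h.symm,
          Finset.mem_filter.2 ⟨Finset.mem_univ _, hfd⟩⟩)
      simp [hT]
  have hmap : ∀ q ∈ Finset.univ.sigma (fun f => Tset G e f),
      (fun q : (_ : Sym2 (Fin n)) × Sym2 (Fin n) => s(q.1, q.2)) q ∈ trianglePairs G e := by
    rintro ⟨f, g⟩ hq
    rw [Finset.mem_sigma, Tset, Finset.mem_filter] at hq
    obtain ⟨-, -, hGf, hGg, ht⟩ := hq
    rw [trianglePairs, Finset.mem_filter]
    exact ⟨Finset.mem_univ _, f, g, rfl, hGf, hGg, ht⟩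
  rw [hstep1, Finset.sum_sigma']
  rw [← Finset.sum_fiberwise_of_maps_to hmap (fun q => 2 * (Z G q.1 : ℝ))]
  apply Finset.sum_le_sum
  intro P hP
  rw [trianglePairs, Finset.mem_filter] at hP
  obtain ⟨-, f, g, hPfg, hGf, hGg, ht⟩ := hP
  have hfg : f ≠ g := (tri_facts ht).2.2.1
  have hle : (Finset.univ.sigma fun f => Tset G e f).filter
      (fun q => s(q.1, q.2) = P) ⊆ {⟨f, g⟩, ⟨g, f⟩} := by
    intro q hq
    rw [Finset.mem_filter] at hq
    have := hq.2
    rw [hPfg, Sym2.eq_iff] at this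
    rcases this with ⟨h1, h2⟩ | ⟨h1, h2⟩
    · simp [Finset.mem_insert, Sigma.ext_iff, h1, h2]
    · simp [Finset.mem_insert, Sigma.ext_iff, h1, h2]
  calc ∑ q ∈ (Finset.univ.sigma fun f => Tset G e f).filter
          (fun q => s(q.1, q.2) = P), 2 * (Z G q.1 : ℝ)
      ≤ ∑ q ∈ ({⟨f, g⟩, ⟨g, f⟩} : Finset ((_ : Sym2 (Fin n)) × Sym2 (Fin n))),
          2 * (Z G q.1 : ℝ) := by
        apply Finset.sum_le_sum_of_subset_of_nonneg hle
        intro q _ _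
        positivity
    _ = 2 * (Z G f : ℝ) + 2 * (Z G g : ℝ) := by
        rw [Finset.sum_pair (by simp [Sigma.ext_iff, hfg])]
    _ ≤ pairCost (fun f => (Z G f : ℝ)) P := by
        rw [hPfg, pairCost, Sym2.lift_mk]
        show _ ≤ 2 * (Z G f : ℝ) + 2 * (Z G g : ℝ) + 2
        linarith

/-- removing an edge `e` of `G` changes `∑_{f ∈ K_n} (Z f)²` by at most
`(Z e)² + ∑_{{e', e''}} (2 * Z e' + 2 * Z e'' + 2)`, the last sum ranging over the
sets `{e', e''}` of edges of `G` forming a triangle with `e`. -/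
theorem sum_Z_sq_remove_edge (n : ℕ) (G : Graph n) (e : Sym2 (Fin n))
    (he : ¬ e.IsDiag) (heG : G e = true) :
    |(∑ f ∈ edges n, (Z G f : ℝ) ^ 2) - ∑ f ∈ edges n, (Z (removeEdge G e) f : ℝ) ^ 2|
      ≤ (Z G e : ℝ) ^ 2
        + ∑ P ∈ trianglePairs G e, pairCost (fun f => (Z G f : ℝ)) P := by
  have heE : e ∈ edges n := Finset.mem_filter.2 ⟨Finset.mem_univ _, he⟩
  have hZe' : Z (removeEdge G e) e = 0 := by simp [Z, removeEdge]
  have hle : ∀ f ∈ edges n, (Z (removeEdge G e) f : ℝ) ^ 2 ≤ (Z G f : ℝ) ^ 2 := by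
    intro f _
    by_cases hf : f = e
    · subst hf; simp [hZe']
    · exact pow_le_pow_left₀ (by positivity) (by exact_mod_cast Z_remove_le G hf) 2
  rw [abs_of_nonneg (by
    rw [sub_nonneg]
    exact Finset.sum_le_sum hle)]
  rw [← Finset.sum_sub_distrib, ← Finset.sum_erase_add _ _ heE]
  have hterm : ∀ f ∈ (edges n).erase e,
      (Z G f : ℝ) ^ 2 - (Z (removeEdge G e) f : ℝ) ^ 2
        ≤ 2 * (Z G f : ℝ) * (Tset G e f).card := by
    intro f hf
    have hfe : f ≠ e := (Finset.mem_erase.1 hf).1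
    have h1 : (Z (removeEdge G e) f : ℝ) ≤ (Z G f : ℝ) := by
      exact_mod_cast Z_remove_le G hfe
    have h2 : (Z G f : ℝ) ≤ (Z (removeEdge G e) f : ℝ) + (Tset G e f).card := by
      exact_mod_cast Z_drop G heG hfe
    nlinarith [Nat.cast_nonneg (α := ℝ) (Z (removeEdge G e) f),
      Nat.cast_nonneg (α := ℝ) (Z G f)]
  have := Finset.sum_le_sum hterm
  have hcount := count_sum G e
  rw [hZe']
  push_cast
  linarith


end RandomTriangles
end
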